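/- With Ω = [[Ω₁, Γ],[Γ†, Ω₂]] and Ωc the restriction of Ω to the reconstructible part H₁c ⊕ H₂c, the spectral multiplicity of Ωc is at most min(2·rank(Γ), dim H₁c, dim H₂c). -/

import Mathlib

open ContinuousLinearMap MeasureTheory

/-- The orbit of a set `S` under an operator `Ω`: the smallest closed `Ω`-invariant
subspace containing `S`. -/
noncomputable def orbit {H : Type*} [NormedAddCommGroup H] [InnerProductSpace ℂ H]
    (Ω : H →L[ℂ] H) (S : Set H) : Submodule ℂ H :=
  sInf {K : Submodule ℂ H | S ⊆ K ∧ IsClosed (K : Set H) ∧ ∀ x ∈ K, Ω x ∈ K}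

variable {H₁ H₂ : Type*} [NormedAddCommGroup H₁] [InnerProductSpace ℂ H₁] [CompleteSpace H₁]
  [NormedAddCommGroup H₂] [InnerProductSpace ℂ H₂] [CompleteSpace H₂]

/-- Inclusion of `H₁` into the Hilbert space direct sum `H₁ ⊕ H₂`. -/
noncomputable def inl' : H₁ →L[ℂ] WithLp 2 (H₁ × H₂) :=
  (WithLp.prodContinuousLinearEquiv 2 ℂ H₁ H₂).symm.toContinuousLinearMap ∘L
    ContinuousLinearMap.inl ℂ H₁ H₂

/-- Inclusion of `H₂` into the Hilbert space direct sum `H₁ ⊕ H₂`. -/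
noncomputable def inr' : H₂ →L[ℂ] WithLp 2 (H₁ × H₂) :=
  (WithLp.prodContinuousLinearEquiv 2 ℂ H₁ H₂).symm.toContinuousLinearMap ∘L
    ContinuousLinearMap.inr ℂ H₁ H₂

/-- The block operator `[[Ω₁, Γ], [Γ†, Ω₂]]` on `H₁ ⊕ H₂`. -/
noncomputable def blockOp (Ω₁ : H₁ →L[ℂ] H₁) (Ω₂ : H₂ →L[ℂ] H₂) (Γ : H₂ →L[ℂ] H₁) :
    WithLp 2 (H₁ × H₂) →L[ℂ] WithLp 2 (H₁ × H₂) :=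
  (WithLp.prodContinuousLinearEquiv 2 ℂ H₁ H₂).symm.toContinuousLinearMap ∘L
    ((Ω₁ ∘L ContinuousLinearMap.fst ℂ H₁ H₂ + Γ ∘L ContinuousLinearMap.snd ℂ H₁ H₂).prod
      ((ContinuousLinearMap.adjoint Γ) ∘L ContinuousLinearMap.fst ℂ H₁ H₂ +
        Ω₂ ∘L ContinuousLinearMap.snd ℂ H₁ H₂)) ∘L
    (WithLp.prodContinuousLinearEquiv 2 ℂ H₁ H₂).toContinuousLinearMap

/-- `H₁` as a subspace of `H₁ ⊕ H₂`. -/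
noncomputable def sub1 : Submodule ℂ (WithLp 2 (H₁ × H₂)) := LinearMap.range ((inl' : H₁ →L[ℂ] WithLp 2 (H₁ × H₂)) : H₁ →ₗ[ℂ] WithLp 2 (H₁ × H₂))

/-- `H₂` as a subspace of `H₁ ⊕ H₂`. -/
noncomputable def sub2 : Submodule ℂ (WithLp 2 (H₁ × H₂)) := LinearMap.range ((inr' : H₂ →L[ℂ] WithLp 2 (H₁ × H₂)) : H₂ →ₗ[ℂ] WithLp 2 (H₁ × H₂))

/-! ### Auxiliary lemmas -/

section OrbitAPI

variable {H : Type*} [NormedAddCommGroup H] [InnerProductSpace ℂ H]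

lemma subset_orbit (Ω : H →L[ℂ] H) (S : Set H) : S ⊆ ↑(orbit Ω S) := fun x hx =>
  Submodule.mem_sInf.2 fun _ hK => hK.1 hx

lemma orbit_isClosed (Ω : H →L[ℂ] H) (S : Set H) : IsClosed ((orbit Ω S : Submodule ℂ H) : Set H) := by
  rw [orbit, Submodule.coe_sInf]
  exact isClosed_biInter fun K hK => hK.2.1

lemma orbit_maps (Ω : H →L[ℂ] H) (S : Set H) {x : H} (hx : x ∈ orbit Ω S) :
    Ω x ∈ orbit Ω S := by
  rw [orbit, Submodule.mem_sInf] at hx ⊢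
  exact fun K hK => hK.2.2 x (hx K hK)

lemma orbit_le (Ω : H →L[ℂ] H) {S : Set H} {K : Submodule ℂ H} (h1 : S ⊆ K)
    (h2 : IsClosed (K : Set H)) (h3 : ∀ x ∈ K, Ω x ∈ K) : orbit Ω S ≤ K :=
  sInf_le ⟨h1, h2, h3⟩

lemma orbit_mono (Ω : H →L[ℂ] H) {S T : Set H} (h : S ⊆ T) : orbit Ω S ≤ orbit Ω T :=
  orbit_le Ω (h.trans (subset_orbit Ω T)) (orbit_isClosed Ω T) (fun _ => orbit_maps Ω T)

end OrbitAPI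

section SupClosed

variable {E : Type*} [NormedAddCommGroup E] [InnerProductSpace ℂ E] [CompleteSpace E]

local notation "⟪" x ", " y "⟫" => @inner ℂ _ _ x y

lemma isClosed_sup_of_orthogonal {U V : Submodule ℂ E} (hU : IsClosed (U : Set E))
    (hV : IsClosed (V : Set E)) (hUV : V ≤ Uᗮ) :
    IsClosed ((U ⊔ V : Submodule ℂ E) : Set E) := by
  haveI : CompleteSpace U := hU.completeSpace_coe
  haveI : CompleteSpace V := hV.completeSpace_coe
  have hVU : U ≤ Vᗮ := by
    intro u hu
    rw [Submodule.mem_orthogonal]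
    intro v hv
    have := hUV hv
    rw [Submodule.mem_orthogonal] at this
    simpa using inner_eq_zero_symm.1 (this u hu)
  have key : (U ⊔ V : Submodule ℂ E) = LinearMap.ker
      (ContinuousLinearMap.id ℂ E - U.subtypeL ∘L Submodule.orthogonalProjectionOnto U
        - V.subtypeL ∘L Submodule.orthogonalProjectionOnto V).toLinearMap := by
    ext z
    constructor
    · intro hz
      rcases Submodule.mem_sup.1 hz with ⟨u, hu, v, hv, rfl⟩
      have h1 : (Submodule.orthogonalProjectionOnto U u : E) = u := Submodule.starProjection_eq_self_iff.2 hu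
      have h2 : Submodule.orthogonalProjectionOnto U v = 0 :=
        Submodule.orthogonalProjectionOnto_apply_of_mem_orthogonal (hUV hv)
      have h3 : (Submodule.orthogonalProjectionOnto V v : E) = v := Submodule.starProjection_eq_self_iff.2 hv
      have h4 : Submodule.orthogonalProjectionOnto V u = 0 :=
        Submodule.orthogonalProjectionOnto_apply_of_mem_orthogonal (hVU hu)
      rw [LinearMap.mem_ker, ContinuousLinearMap.coe_coe]
      simp only [LinearMap.mem_ker, ContinuousLinearMap.coe_sub', Pi.sub_apply,
        ContinuousLinearMap.coe_id', id_eq, ContinuousLinearMap.coe_comp', Function.comp_apply,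
        Submodule.coe_subtypeL', Submodule.coe_subtype, map_add, h2, h4, ContinuousLinearMap.coe_coe]
      rw [h1, h3]
      simp
    · intro hz
      rw [LinearMap.mem_ker, ContinuousLinearMap.coe_coe] at hz
      have h5 : z - ((Submodule.orthogonalProjectionOnto U z : E) + (Submodule.orthogonalProjectionOnto V z : E)) = 0 := by
        simpa only [ContinuousLinearMap.coe_sub', Pi.sub_apply, ContinuousLinearMap.coe_id',
          id_eq, ContinuousLinearMap.coe_comp', Function.comp_apply, Submodule.coe_subtypeL',
          Submodule.coe_subtype, sub_sub, ContinuousLinearMap.coe_coe, ContinuousLinearMap.add_apply] using hz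
      rw [sub_eq_zero] at h5
      rw [h5]
      exact Submodule.add_mem_sup (Submodule.coe_mem _) (Submodule.coe_mem _)
  rw [key]
  exact isClosed_ker _

end SupClosed
set_option linter.unusedSectionVars false
set_option linter.unusedVariables false

section BlockAux

local notation "⟪" x ", " y "⟫" => @inner ℂ _ _ x y

/-- Auxiliary constructor for elements of the Hilbert direct sum. -/
noncomputable def mk2 (x : H₁) (y : H₂) : WithLp 2 (H₁ × H₂) :=
  (WithLp.prodContinuousLinearEquiv 2 ℂ H₁ H₂).symm (x, y)

lemma mk2_fst (x : H₁) (y : H₂) : (mk2 x y).fst = x := rfl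
lemma mk2_snd (x : H₁) (y : H₂) : (mk2 x y).snd = y := rfl
lemma mk2_eta (z : WithLp 2 (H₁ × H₂)) : mk2 z.fst z.snd = z := rfl
lemma inl'_eq (x : H₁) : (inl' x : WithLp 2 (H₁ × H₂)) = mk2 x 0 := rfl
lemma inr'_eq (y : H₂) : (inr' y : WithLp 2 (H₁ × H₂)) = mk2 0 y := rfl
lemma mk2_add (x x' : H₁) (y y' : H₂) : mk2 x y + mk2 x' y' = mk2 (x + x') (y + y') := rfl
lemma mk2_split (x : H₁) (y : H₂) : mk2 x y = mk2 x 0 + mk2 0 y := by rw [mk2_add]; simp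
lemma mk2_sub (x x' : H₁) (y y' : H₂) : mk2 x y - mk2 x' y' = mk2 (x - x') (y - y') := rfl
lemma prod_inner_apply' (x y : WithLp 2 (H₁ × H₂)) :
    ⟪x, y⟫ = ⟪x.fst, y.fst⟫ + ⟪x.snd, y.snd⟫ := rfl
lemma ext2 {z w : WithLp 2 (H₁ × H₂)} (h1 : z.fst = w.fst) (h2 : z.snd = w.snd) : z = w :=
  (WithLp.ext_iff 2).2 (Prod.ext h1 h2)

lemma blockOp_mk2 (Ω₁ : H₁ →L[ℂ] H₁) (Ω₂ : H₂ →L[ℂ] H₂) (Γ : H₂ →L[ℂ] H₁) (x : H₁) (y : H₂) :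
    blockOp Ω₁ Ω₂ Γ (mk2 x y) = mk2 (Ω₁ x + Γ y) (ContinuousLinearMap.adjoint Γ x + Ω₂ y) := rfl

lemma inner_mk2 (x x' : H₁) (y y' : H₂) :
    ⟪(mk2 x y : WithLp 2 (H₁ × H₂)), mk2 x' y'⟫ = ⟪x, x'⟫ + ⟪y, y'⟫ := rfl

lemma mem_sub1 {z : WithLp 2 (H₁ × H₂)} : z ∈ (sub1 : Submodule ℂ (WithLp 2 (H₁ × H₂))) ↔
    z.snd = 0 := by
  constructor
  · intro hz; obtain ⟨x, rfl⟩ := LinearMap.mem_range.1 hz; rfl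
  · intro h; exact LinearMap.mem_range.2 ⟨z.fst, by show inl' z.fst = z; rw [inl'_eq, ← h, mk2_eta]⟩

lemma mem_sub2 {z : WithLp 2 (H₁ × H₂)} : z ∈ (sub2 : Submodule ℂ (WithLp 2 (H₁ × H₂))) ↔
    z.fst = 0 := by
  constructor
  · intro hz; obtain ⟨y, rfl⟩ := LinearMap.mem_range.1 hz; rfl
  · intro h; exact LinearMap.mem_range.2 ⟨z.snd, by show inr' z.snd = z; rw [inr'_eq, ← h, mk2_eta]⟩

lemma isClosed_sub1 : IsClosed ((sub1 : Submodule ℂ (WithLp 2 (H₁ × H₂))) : Set (WithLp 2 (H₁ × H₂))) := by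
  have : (sub1 : Submodule ℂ (WithLp 2 (H₁ × H₂))) = LinearMap.ker
      ((ContinuousLinearMap.snd ℂ H₁ H₂) ∘L
        (WithLp.prodContinuousLinearEquiv 2 ℂ H₁ H₂).toContinuousLinearMap).toLinearMap := by
    ext z; rw [mem_sub1, LinearMap.mem_ker]; rfl
  rw [this]
  exact isClosed_ker ((ContinuousLinearMap.snd ℂ H₁ H₂) ∘L
    (WithLp.prodContinuousLinearEquiv 2 ℂ H₁ H₂).toContinuousLinearMap)

lemma isClosed_sub2 : IsClosed ((sub2 : Submodule ℂ (WithLp 2 (H₁ × H₂))) : Set (WithLp 2 (H₁ × H₂))) := by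
  have : (sub2 : Submodule ℂ (WithLp 2 (H₁ × H₂))) = LinearMap.ker
      ((ContinuousLinearMap.fst ℂ H₁ H₂) ∘L
        (WithLp.prodContinuousLinearEquiv 2 ℂ H₁ H₂).toContinuousLinearMap).toLinearMap := by
    ext z; rw [mem_sub2, LinearMap.mem_ker]; rfl
  rw [this]
  exact isClosed_ker ((ContinuousLinearMap.fst ℂ H₁ H₂) ∘L
    (WithLp.prodContinuousLinearEquiv 2 ℂ H₁ H₂).toContinuousLinearMap)

lemma sub1_orth : ((sub1 : Submodule ℂ (WithLp 2 (H₁ × H₂)))ᗮ) = sub2 := by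
  ext z
  rw [Submodule.mem_orthogonal, mem_sub2]
  constructor
  · intro h
    have := h (mk2 z.fst 0) (mem_sub1.2 rfl)
    rw [prod_inner_apply'] at this
    simpa [mk2_fst, mk2_snd, inner_self_eq_zero] using this
  · intro h u hu
    rw [prod_inner_apply', mem_sub1.1 hu, h]
    simp

lemma sub2_orth : ((sub2 : Submodule ℂ (WithLp 2 (H₁ × H₂)))ᗮ) = sub1 := by
  ext z
  rw [Submodule.mem_orthogonal, mem_sub1]
  constructor
  · intro h
    have := h (mk2 0 z.snd) (mem_sub2.2 rfl)
    rw [prod_inner_apply'] at this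
    simpa [mk2_fst, mk2_snd, inner_self_eq_zero] using this
  · intro h u hu
    rw [prod_inner_apply', mem_sub2.1 hu, h]
    simp

lemma blockOp_selfAdjoint {Ω₁ : H₁ →L[ℂ] H₁} {Ω₂ : H₂ →L[ℂ] H₂} (Γ : H₂ →L[ℂ] H₁)
    (hΩ₁ : IsSelfAdjoint Ω₁) (hΩ₂ : IsSelfAdjoint Ω₂) :
    IsSelfAdjoint (blockOp Ω₁ Ω₂ Γ) := by
  rw [ContinuousLinearMap.isSelfAdjoint_iff_isSymmetric]
  intro z w
  have hz : blockOp Ω₁ Ω₂ Γ z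
      = mk2 (Ω₁ z.fst + Γ z.snd) (ContinuousLinearMap.adjoint Γ z.fst + Ω₂ z.snd) := rfl
  have hw : blockOp Ω₁ Ω₂ Γ w
      = mk2 (Ω₁ w.fst + Γ w.snd) (ContinuousLinearMap.adjoint Γ w.fst + Ω₂ w.snd) := rfl
  simp only [ContinuousLinearMap.coe_coe]
  rw [hz, hw, prod_inner_apply', prod_inner_apply', mk2_fst, mk2_snd, mk2_fst,
    mk2_snd, inner_add_left, inner_add_left, inner_add_right, inner_add_right]
  have e1 : ⟪Ω₁ z.fst, w.fst⟫ = ⟪z.fst, Ω₁ w.fst⟫ := by simpa using hΩ₁.isSymmetric z.fst w.fst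
  have e2 : ⟪Ω₂ z.snd, w.snd⟫ = ⟪z.snd, Ω₂ w.snd⟫ := by simpa using hΩ₂.isSymmetric z.snd w.snd
  rw [e1, e2, ContinuousLinearMap.adjoint_inner_left, ContinuousLinearMap.adjoint_inner_right]
  ring

end BlockAux
section Core

local notation "⟪" x ", " y "⟫" => @inner ℂ _ _ x y

lemma fst_add (z w : WithLp 2 (H₁ × H₂)) : (z + w).fst = z.fst + w.fst := rfl
lemma snd_add (z w : WithLp 2 (H₁ × H₂)) : (z + w).snd = z.snd + w.snd := rfl
lemma fst_sub (z w : WithLp 2 (H₁ × H₂)) : (z - w).fst = z.fst - w.fst := rfl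
lemma snd_sub (z w : WithLp 2 (H₁ × H₂)) : (z - w).snd = z.snd - w.snd := rfl
lemma inl'_fst (x : H₁) : (inl' x : WithLp 2 (H₁ × H₂)).fst = x := rfl
lemma inl'_snd (x : H₁) : (inl' x : WithLp 2 (H₁ × H₂)).snd = 0 := rfl
lemma inr'_fst (y : H₂) : (inr' y : WithLp 2 (H₁ × H₂)).fst = 0 := rfl
lemma inr'_snd (y : H₂) : (inr' y : WithLp 2 (H₁ × H₂)).snd = y := rfl

variable (Ω₁ : H₁ →L[ℂ] H₁) (Ω₂ : H₂ →L[ℂ] H₂) (Γ : H₂ →L[ℂ] H₁)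

lemma blockOp_fst (z : WithLp 2 (H₁ × H₂)) :
    (blockOp Ω₁ Ω₂ Γ z).fst = Ω₁ z.fst + Γ z.snd := rfl
lemma blockOp_snd (z : WithLp 2 (H₁ × H₂)) :
    (blockOp Ω₁ Ω₂ Γ z).snd = ContinuousLinearMap.adjoint Γ z.fst + Ω₂ z.snd := rfl

/-- The coupled part of `H₂` (as a subspace of the direct sum). -/
noncomputable def H2cD : Submodule ℂ (WithLp 2 (H₁ × H₂)) :=
  orbit (blockOp Ω₁ Ω₂ Γ) (sub1 : Submodule ℂ (WithLp 2 (H₁ × H₂))) ⊓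
    (sub1 : Submodule ℂ (WithLp 2 (H₁ × H₂)))ᗮ

/-- The coupled part of `H₁` (as a subspace of the direct sum). -/
noncomputable def H1cD : Submodule ℂ (WithLp 2 (H₁ × H₂)) :=
  orbit (blockOp Ω₁ Ω₂ Γ) (sub2 : Submodule ℂ (WithLp 2 (H₁ × H₂))) ⊓
    (sub2 : Submodule ℂ (WithLp 2 (H₁ × H₂)))ᗮ

lemma isClosed_H1cD : IsClosed ((H1cD Ω₁ Ω₂ Γ : Submodule ℂ (WithLp 2 (H₁ × H₂))) :
    Set (WithLp 2 (H₁ × H₂))) := by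
  rw [H1cD, Submodule.coe_inf]
  exact (orbit_isClosed _ _).inter (Submodule.isClosed_orthogonal _)

lemma isClosed_H2cD : IsClosed ((H2cD Ω₁ Ω₂ Γ : Submodule ℂ (WithLp 2 (H₁ × H₂))) :
    Set (WithLp 2 (H₁ × H₂))) := by
  rw [H2cD, Submodule.coe_inf]
  exact (orbit_isClosed _ _).inter (Submodule.isClosed_orthogonal _)

lemma H1cD_le_sub1 : H1cD Ω₁ Ω₂ Γ ≤ (sub1 : Submodule ℂ (WithLp 2 (H₁ × H₂))) := by
  rw [H1cD, ← sub2_orth]; exact inf_le_right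

lemma H2cD_le_sub2 : H2cD Ω₁ Ω₂ Γ ≤ (sub2 : Submodule ℂ (WithLp 2 (H₁ × H₂))) := by
  rw [H2cD, ← sub1_orth]; exact inf_le_right

lemma inl_gamma_mem (y : H₂) : inl' (Γ y) ∈ H1cD Ω₁ Ω₂ Γ := by
  have key : (inl' (Γ y) : WithLp 2 (H₁ × H₂))
      = blockOp Ω₁ Ω₂ Γ (inr' y) - inr' (Ω₂ y) := by
    apply ext2 <;>
      simp [blockOp_fst, blockOp_snd, inl'_fst, inl'_snd, inr'_fst, inr'_snd, fst_sub, snd_sub]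
  rw [H1cD, Submodule.mem_inf]
  refine ⟨?_, ?_⟩
  · have h1 : (inr' y : WithLp 2 (H₁ × H₂)) ∈ orbit (blockOp Ω₁ Ω₂ Γ)
        (sub2 : Submodule ℂ (WithLp 2 (H₁ × H₂))) :=
      subset_orbit _ _ (by exact mem_sub2.2 rfl)
    have h2 : (inr' (Ω₂ y) : WithLp 2 (H₁ × H₂)) ∈ orbit (blockOp Ω₁ Ω₂ Γ)
        (sub2 : Submodule ℂ (WithLp 2 (H₁ × H₂))) :=
      subset_orbit _ _ (by exact mem_sub2.2 rfl)
    rw [key]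
    exact Submodule.sub_mem _ (orbit_maps _ _ h1) h2
  · rw [sub2_orth]
    exact mem_sub1.2 rfl

lemma inr_gammaStar_mem (x : H₁) :
    inr' (ContinuousLinearMap.adjoint Γ x) ∈ H2cD Ω₁ Ω₂ Γ := by
  have key : (inr' (ContinuousLinearMap.adjoint Γ x) : WithLp 2 (H₁ × H₂))
      = blockOp Ω₁ Ω₂ Γ (inl' x) - inl' (Ω₁ x) := by
    apply ext2 <;>
      simp [blockOp_fst, blockOp_snd, inl'_fst, inl'_snd, inr'_fst, inr'_snd, fst_sub, snd_sub]
  rw [H2cD, Submodule.mem_inf]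
  refine ⟨?_, ?_⟩
  · have h1 : (inl' x : WithLp 2 (H₁ × H₂)) ∈ orbit (blockOp Ω₁ Ω₂ Γ)
        (sub1 : Submodule ℂ (WithLp 2 (H₁ × H₂))) :=
      subset_orbit _ _ (by exact mem_sub1.2 rfl)
    have h2 : (inl' (Ω₁ x) : WithLp 2 (H₁ × H₂)) ∈ orbit (blockOp Ω₁ Ω₂ Γ)
        (sub1 : Submodule ℂ (WithLp 2 (H₁ × H₂))) :=
      subset_orbit _ _ (by exact mem_sub1.2 rfl)
    rw [key]
    exact Submodule.sub_mem _ (orbit_maps _ _ h1) h2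
  · rw [sub1_orth]
    exact mem_sub2.2 rfl

lemma H2cD_mem_fst_zero {z : WithLp 2 (H₁ × H₂)} (hz : z ∈ H2cD Ω₁ Ω₂ Γ) : z.fst = 0 :=
  mem_sub2.1 (H2cD_le_sub2 Ω₁ Ω₂ Γ hz)

lemma H1cD_mem_snd_zero {z : WithLp 2 (H₁ × H₂)} (hz : z ∈ H1cD Ω₁ Ω₂ Γ) : z.snd = 0 :=
  mem_sub1.1 (H1cD_le_sub1 Ω₁ Ω₂ Γ hz)

lemma snd_step {z : WithLp 2 (H₁ × H₂)} (hz : z ∈ H2cD Ω₁ Ω₂ Γ) :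
    inr' (Ω₂ z.snd) ∈ H2cD Ω₁ Ω₂ Γ := by
  have hfst : z.fst = 0 := H2cD_mem_fst_zero Ω₁ Ω₂ Γ hz
  have key : (inr' (Ω₂ z.snd) : WithLp 2 (H₁ × H₂))
      = blockOp Ω₁ Ω₂ Γ z - inl' (Γ z.snd) := by
    apply ext2 <;>
      simp [blockOp_fst, blockOp_snd, inl'_fst, inl'_snd, inr'_fst, inr'_snd, fst_sub, snd_sub,
        hfst]
  have hz1 : z ∈ orbit (blockOp Ω₁ Ω₂ Γ) (sub1 : Submodule ℂ (WithLp 2 (H₁ × H₂))) :=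
    (Submodule.mem_inf.1 hz).1
  rw [H2cD, Submodule.mem_inf]
  refine ⟨?_, ?_⟩
  · rw [key]
    have h1 := orbit_maps (blockOp Ω₁ Ω₂ Γ) _ hz1
    have h2 : (inl' (Γ z.snd) : WithLp 2 (H₁ × H₂)) ∈ orbit (blockOp Ω₁ Ω₂ Γ)
        (sub1 : Submodule ℂ (WithLp 2 (H₁ × H₂))) := subset_orbit _ _ (by exact mem_sub1.2 rfl)
    exact Submodule.sub_mem _ h1 h2
  · rw [sub1_orth]
    exact mem_sub2.2 rfl

lemma fst_step {z : WithLp 2 (H₁ × H₂)} (hz : z ∈ H1cD Ω₁ Ω₂ Γ) :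
    inl' (Ω₁ z.fst) ∈ H1cD Ω₁ Ω₂ Γ := by
  have hsnd : z.snd = 0 := H1cD_mem_snd_zero Ω₁ Ω₂ Γ hz
  have key : (inl' (Ω₁ z.fst) : WithLp 2 (H₁ × H₂))
      = blockOp Ω₁ Ω₂ Γ z - inr' (ContinuousLinearMap.adjoint Γ z.fst) := by
    apply ext2 <;>
      simp [blockOp_fst, blockOp_snd, inl'_fst, inl'_snd, inr'_fst, inr'_snd, fst_sub, snd_sub,
        hsnd]
  have hz1 : z ∈ orbit (blockOp Ω₁ Ω₂ Γ) (sub2 : Submodule ℂ (WithLp 2 (H₁ × H₂))) :=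
    (Submodule.mem_inf.1 hz).1
  rw [H1cD, Submodule.mem_inf]
  refine ⟨?_, ?_⟩
  · rw [key]
    have h1 := orbit_maps (blockOp Ω₁ Ω₂ Γ) _ hz1
    have h2 : (inr' (ContinuousLinearMap.adjoint Γ z.fst) : WithLp 2 (H₁ × H₂)) ∈
        orbit (blockOp Ω₁ Ω₂ Γ) (sub2 : Submodule ℂ (WithLp 2 (H₁ × H₂))) :=
      subset_orbit _ _ (by exact mem_sub2.2 rfl)
    exact Submodule.sub_mem _ h1 h2
  · rw [sub2_orth]
    exact mem_sub1.2 rfl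

lemma M_invariant {z : WithLp 2 (H₁ × H₂)} (hz : z ∈ H1cD Ω₁ Ω₂ Γ ⊔ H2cD Ω₁ Ω₂ Γ) :
    blockOp Ω₁ Ω₂ Γ z ∈ H1cD Ω₁ Ω₂ Γ ⊔ H2cD Ω₁ Ω₂ Γ := by
  rcases Submodule.mem_sup.1 hz with ⟨u, hu, v, hv, rfl⟩
  rw [map_add]
  apply Submodule.add_mem
  · have key : blockOp Ω₁ Ω₂ Γ u
        = inl' (Ω₁ u.fst) + inr' (ContinuousLinearMap.adjoint Γ u.fst) := by
      apply ext2 <;>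
        simp [blockOp_fst, blockOp_snd, inl'_fst, inl'_snd, inr'_fst, inr'_snd, fst_add, snd_add,
          H1cD_mem_snd_zero Ω₁ Ω₂ Γ hu]
    rw [key]
    exact Submodule.add_mem _ (Submodule.mem_sup_left (fst_step Ω₁ Ω₂ Γ hu))
      (Submodule.mem_sup_right (inr_gammaStar_mem Ω₁ Ω₂ Γ u.fst))
  · have key : blockOp Ω₁ Ω₂ Γ v = inl' (Γ v.snd) + inr' (Ω₂ v.snd) := by
      apply ext2 <;>
        simp [blockOp_fst, blockOp_snd, inl'_fst, inl'_snd, inr'_fst, inr'_snd, fst_add, snd_add,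
          H2cD_mem_fst_zero Ω₁ Ω₂ Γ hv]
    rw [key]
    exact Submodule.add_mem _ (Submodule.mem_sup_left (inl_gamma_mem Ω₁ Ω₂ Γ v.snd))
      (Submodule.mem_sup_right (snd_step Ω₁ Ω₂ Γ hv))

lemma isClosed_M : IsClosed ((H1cD Ω₁ Ω₂ Γ ⊔ H2cD Ω₁ Ω₂ Γ : Submodule ℂ (WithLp 2 (H₁ × H₂))) :
    Set (WithLp 2 (H₁ × H₂))) := by
  apply isClosed_sup_of_orthogonal (isClosed_H1cD Ω₁ Ω₂ Γ) (isClosed_H2cD Ω₁ Ω₂ Γ)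
  calc H2cD Ω₁ Ω₂ Γ ≤ (sub1 : Submodule ℂ (WithLp 2 (H₁ × H₂)))ᗮ := inf_le_right
  _ ≤ (H1cD Ω₁ Ω₂ Γ)ᗮ := Submodule.orthogonal_le (H1cD_le_sub1 Ω₁ Ω₂ Γ)

end Core
section Recon

local notation "⟪" x ", " y "⟫" => @inner ℂ _ _ x y

/-- The generating set `Ran Γ ⊕ Ran Γ†` inside the direct sum. -/
noncomputable def ASet (Γ : H₂ →L[ℂ] H₁) : Set (WithLp 2 (H₁ × H₂)) :=
  (inl' '' (LinearMap.range (Γ : H₂ →ₗ[ℂ] H₁) : Set H₁)) ∪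
    (inr' '' (LinearMap.range ((ContinuousLinearMap.adjoint Γ : H₁ →L[ℂ] H₂) : H₁ →ₗ[ℂ] H₂) : Set H₂))

variable (Ω₁ : H₁ →L[ℂ] H₁) (Ω₂ : H₂ →L[ℂ] H₂) (Γ : H₂ →L[ℂ] H₁)

lemma ASet_subset_M : ASet Γ ⊆ ↑(H1cD Ω₁ Ω₂ Γ ⊔ H2cD Ω₁ Ω₂ Γ) := by
  rintro z (⟨x, ⟨y, rfl⟩, rfl⟩ | ⟨y, ⟨x, rfl⟩, rfl⟩)
  · exact Submodule.mem_sup_left (inl_gamma_mem Ω₁ Ω₂ Γ y)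
  · exact Submodule.mem_sup_right (inr_gammaStar_mem Ω₁ Ω₂ Γ x)

lemma orbit_le_M {S : Set (WithLp 2 (H₁ × H₂))}
    (hS : S ⊆ ↑(H1cD Ω₁ Ω₂ Γ ⊔ H2cD Ω₁ Ω₂ Γ)) :
    orbit (blockOp Ω₁ Ω₂ Γ) S ≤ H1cD Ω₁ Ω₂ Γ ⊔ H2cD Ω₁ Ω₂ Γ :=
  orbit_le _ hS (isClosed_M Ω₁ Ω₂ Γ) (fun _ hz => M_invariant Ω₁ Ω₂ Γ hz)

/-- Key reconstruction step: `H2c` is contained in the orbit of any closed invariant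
subspace `K` that contains the coupling ranges. -/
lemma H2cD_le_of_closed_invariant {K : Submodule ℂ (WithLp 2 (H₁ × H₂))}
    (hKcl : IsClosed (K : Set (WithLp 2 (H₁ × H₂))))
    (hKinv : ∀ z ∈ K, blockOp Ω₁ Ω₂ Γ z ∈ K)
    (hKl : ∀ y : H₂, inl' (Γ y) ∈ K)
    (hKr : ∀ x : H₁, inr' (ContinuousLinearMap.adjoint Γ x) ∈ K) :
    H2cD Ω₁ Ω₂ Γ ≤ K := by
  classical
  haveI : CompleteSpace (sub1 : Submodule ℂ (WithLp 2 (H₁ × H₂))) :=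
    (isClosed_sub1).completeSpace_coe
  set K₂ : Submodule ℂ (WithLp 2 (H₁ × H₂)) :=
    K ⊓ (sub1 : Submodule ℂ (WithLp 2 (H₁ × H₂)))ᗮ with hK₂
  set V : Submodule ℂ (WithLp 2 (H₁ × H₂)) :=
    (sub1 : Submodule ℂ (WithLp 2 (H₁ × H₂))) ⊔ K₂ with hV
  have hVinv : ∀ z ∈ V, blockOp Ω₁ Ω₂ Γ z ∈ V := by
    intro z hz
    rcases Submodule.mem_sup.1 hz with ⟨a, ha, k, hk, rfl⟩
    rw [map_add]
    apply Submodule.add_mem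
    · have hsnd : a.snd = 0 := mem_sub1.1 ha
      have key : blockOp Ω₁ Ω₂ Γ a
          = inl' (Ω₁ a.fst) + inr' (ContinuousLinearMap.adjoint Γ a.fst) := by
        apply ext2 <;>
          simp [blockOp_fst, blockOp_snd, inl'_fst, inl'_snd, inr'_fst, inr'_snd, fst_add,
            snd_add, hsnd]
      rw [key]
      apply Submodule.add_mem
      · exact Submodule.mem_sup_left (mem_sub1.2 rfl)
      · refine Submodule.mem_sup_right (Submodule.mem_inf.2 ⟨hKr a.fst, ?_⟩)
        rw [sub1_orth]; exact mem_sub2.2 rfl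
    · have hfst : k.fst = 0 := by
        have := (Submodule.mem_inf.1 hk).2
        rw [sub1_orth] at this
        exact mem_sub2.1 this
      have key : blockOp Ω₁ Ω₂ Γ k = inl' (Γ k.snd) + inr' (Ω₂ k.snd) := by
        apply ext2 <;>
          simp [blockOp_fst, blockOp_snd, inl'_fst, inl'_snd, inr'_fst, inr'_snd, fst_add,
            snd_add, hfst]
      rw [key]
      apply Submodule.add_mem
      · exact Submodule.mem_sup_left (mem_sub1.2 rfl)
      · refine Submodule.mem_sup_right (Submodule.mem_inf.2 ⟨?_, ?_⟩)
        · have h1 : blockOp Ω₁ Ω₂ Γ k ∈ K := hKinv k (Submodule.mem_inf.1 hk).1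
          have h2 := hKl k.snd
          have : (inr' (Ω₂ k.snd) : WithLp 2 (H₁ × H₂))
              = blockOp Ω₁ Ω₂ Γ k - inl' (Γ k.snd) := by rw [key]; abel
          rw [this]
          exact Submodule.sub_mem _ h1 h2
        · rw [sub1_orth]; exact mem_sub2.2 rfl
  have horb : orbit (blockOp Ω₁ Ω₂ Γ) (sub1 : Submodule ℂ (WithLp 2 (H₁ × H₂)))
      ≤ V.topologicalClosure := by
    apply orbit_le
    · exact fun x hx => Submodule.le_topologicalClosure V (Submodule.mem_sup_left hx)
    · exact V.isClosed_topologicalClosure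
    · intro x hx
      have h1 : blockOp Ω₁ Ω₂ Γ x ∈ (blockOp Ω₁ Ω₂ Γ) '' (closure (V : Set _)) :=
        ⟨x, hx, rfl⟩
      have h2 : (blockOp Ω₁ Ω₂ Γ) '' (closure (V : Set _))
          ⊆ closure ((blockOp Ω₁ Ω₂ Γ) '' (V : Set _)) :=
        image_closure_subset_closure_image (blockOp Ω₁ Ω₂ Γ).continuous
      have h3 : (blockOp Ω₁ Ω₂ Γ) '' (V : Set _) ⊆ (V : Set _) := by
        rintro _ ⟨v, hv, rfl⟩; exact hVinv v hv
      exact (closure_mono h3) (h2 h1)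
  intro x hx
  have hx1 : x ∈ closure (V : Set (WithLp 2 (H₁ × H₂))) :=
    horb (Submodule.mem_inf.1 hx).1
  have hx2 : x ∈ (sub1 : Submodule ℂ (WithLp 2 (H₁ × H₂)))ᗮ := (Submodule.mem_inf.1 hx).2
  -- project onto sub1ᗮ
  set Q : WithLp 2 (H₁ × H₂) →L[ℂ] WithLp 2 (H₁ × H₂) :=
    ((sub1 : Submodule ℂ (WithLp 2 (H₁ × H₂)))ᗮ).subtypeL ∘L
      Submodule.orthogonalProjectionOnto ((sub1 : Submodule ℂ (WithLp 2 (H₁ × H₂)))ᗮ) with hQ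
  have hQV : Q '' (V : Set _) ⊆ (K₂ : Set _) := by
    rintro _ ⟨v, hv, rfl⟩
    rcases Submodule.mem_sup.1 hv with ⟨a, ha, k, hk, rfl⟩
    have h1 : Submodule.orthogonalProjectionOnto ((sub1 : Submodule ℂ (WithLp 2 (H₁ × H₂)))ᗮ) a = 0 := by
      apply Submodule.orthogonalProjectionOnto_apply_of_mem_orthogonal
      rw [Submodule.orthogonal_orthogonal]
      exact ha
    have h2 : (Submodule.orthogonalProjectionOnto ((sub1 : Submodule ℂ (WithLp 2 (H₁ × H₂)))ᗮ) k :
        WithLp 2 (H₁ × H₂)) = k :=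
      Submodule.starProjection_eq_self_iff.2 (Submodule.mem_inf.1 hk).2
    have : Q (a + k) = k := by
      rw [hQ]
      simp only [ContinuousLinearMap.coe_comp', Function.comp_apply, Submodule.coe_subtypeL',
        Submodule.coe_subtype, map_add, h1, h2]
      simp [h2]
    rw [this]
    exact hk
  have hxQ : Q x = x := by
    rw [hQ]
    simp only [ContinuousLinearMap.coe_comp', Function.comp_apply, Submodule.coe_subtypeL',
      Submodule.coe_subtype]
    exact Submodule.starProjection_eq_self_iff.2 hx2
  have : x ∈ closure (K₂ : Set (WithLp 2 (H₁ × H₂))) := by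
    rw [← hxQ]
    have h1 : Q x ∈ Q '' (closure (V : Set _)) := ⟨x, hx1, rfl⟩
    have h2 := image_closure_subset_closure_image Q.continuous (s := (V : Set (WithLp 2 (H₁ × H₂))))
    exact (closure_mono hQV) (h2 h1)
  have hK₂cl : IsClosed (K₂ : Set (WithLp 2 (H₁ × H₂))) := by
    rw [hK₂, Submodule.coe_inf]
    exact hKcl.inter (Submodule.isClosed_orthogonal _)
  have := hK₂cl.closure_subset this
  exact (Submodule.mem_inf.1 this).1

/-- Mirror version for `H1c`. -/
lemma H1cD_le_of_closed_invariant {K : Submodule ℂ (WithLp 2 (H₁ × H₂))}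
    (hKcl : IsClosed (K : Set (WithLp 2 (H₁ × H₂))))
    (hKinv : ∀ z ∈ K, blockOp Ω₁ Ω₂ Γ z ∈ K)
    (hKl : ∀ y : H₂, inl' (Γ y) ∈ K)
    (hKr : ∀ x : H₁, inr' (ContinuousLinearMap.adjoint Γ x) ∈ K) :
    H1cD Ω₁ Ω₂ Γ ≤ K := by
  classical
  haveI : CompleteSpace (sub2 : Submodule ℂ (WithLp 2 (H₁ × H₂))) :=
    (isClosed_sub2).completeSpace_coe
  set K₁ : Submodule ℂ (WithLp 2 (H₁ × H₂)) :=
    K ⊓ (sub2 : Submodule ℂ (WithLp 2 (H₁ × H₂)))ᗮ with hK₁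
  set V : Submodule ℂ (WithLp 2 (H₁ × H₂)) :=
    (sub2 : Submodule ℂ (WithLp 2 (H₁ × H₂))) ⊔ K₁ with hV
  have hVinv : ∀ z ∈ V, blockOp Ω₁ Ω₂ Γ z ∈ V := by
    intro z hz
    rcases Submodule.mem_sup.1 hz with ⟨a, ha, k, hk, rfl⟩
    rw [map_add]
    apply Submodule.add_mem
    · have hfst : a.fst = 0 := mem_sub2.1 ha
      have key : blockOp Ω₁ Ω₂ Γ a = inl' (Γ a.snd) + inr' (Ω₂ a.snd) := by
        apply ext2 <;>
          simp [blockOp_fst, blockOp_snd, inl'_fst, inl'_snd, inr'_fst, inr'_snd, fst_add,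
            snd_add, hfst]
      rw [key]
      apply Submodule.add_mem
      · refine Submodule.mem_sup_right (Submodule.mem_inf.2 ⟨hKl a.snd, ?_⟩)
        rw [sub2_orth]; exact mem_sub1.2 rfl
      · exact Submodule.mem_sup_left (mem_sub2.2 rfl)
    · have hsnd : k.snd = 0 := by
        have := (Submodule.mem_inf.1 hk).2
        rw [sub2_orth] at this
        exact mem_sub1.1 this
      have key : blockOp Ω₁ Ω₂ Γ k
          = inl' (Ω₁ k.fst) + inr' (ContinuousLinearMap.adjoint Γ k.fst) := by
        apply ext2 <;>
          simp [blockOp_fst, blockOp_snd, inl'_fst, inl'_snd, inr'_fst, inr'_snd, fst_add,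
            snd_add, hsnd]
      rw [key]
      apply Submodule.add_mem
      · refine Submodule.mem_sup_right (Submodule.mem_inf.2 ⟨?_, ?_⟩)
        · have h1 : blockOp Ω₁ Ω₂ Γ k ∈ K := hKinv k (Submodule.mem_inf.1 hk).1
          have h2 := hKr k.fst
          have : (inl' (Ω₁ k.fst) : WithLp 2 (H₁ × H₂))
              = blockOp Ω₁ Ω₂ Γ k - inr' (ContinuousLinearMap.adjoint Γ k.fst) := by
            rw [key]; abel
          rw [this]
          exact Submodule.sub_mem _ h1 h2
        · rw [sub2_orth]; exact mem_sub1.2 rfl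
      · exact Submodule.mem_sup_left (mem_sub2.2 rfl)
  have horb : orbit (blockOp Ω₁ Ω₂ Γ) (sub2 : Submodule ℂ (WithLp 2 (H₁ × H₂)))
      ≤ V.topologicalClosure := by
    apply orbit_le
    · exact fun x hx => Submodule.le_topologicalClosure V (Submodule.mem_sup_left hx)
    · exact V.isClosed_topologicalClosure
    · intro x hx
      have h1 : blockOp Ω₁ Ω₂ Γ x ∈ (blockOp Ω₁ Ω₂ Γ) '' (closure (V : Set _)) :=
        ⟨x, hx, rfl⟩
      have h2 : (blockOp Ω₁ Ω₂ Γ) '' (closure (V : Set _))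
          ⊆ closure ((blockOp Ω₁ Ω₂ Γ) '' (V : Set _)) :=
        image_closure_subset_closure_image (blockOp Ω₁ Ω₂ Γ).continuous
      have h3 : (blockOp Ω₁ Ω₂ Γ) '' (V : Set _) ⊆ (V : Set _) := by
        rintro _ ⟨v, hv, rfl⟩; exact hVinv v hv
      exact (closure_mono h3) (h2 h1)
  intro x hx
  have hx1 : x ∈ closure (V : Set (WithLp 2 (H₁ × H₂))) :=
    horb (Submodule.mem_inf.1 hx).1
  have hx2 : x ∈ (sub2 : Submodule ℂ (WithLp 2 (H₁ × H₂)))ᗮ := (Submodule.mem_inf.1 hx).2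
  set Q : WithLp 2 (H₁ × H₂) →L[ℂ] WithLp 2 (H₁ × H₂) :=
    ((sub2 : Submodule ℂ (WithLp 2 (H₁ × H₂)))ᗮ).subtypeL ∘L
      Submodule.orthogonalProjectionOnto ((sub2 : Submodule ℂ (WithLp 2 (H₁ × H₂)))ᗮ) with hQ
  have hQV : Q '' (V : Set _) ⊆ (K₁ : Set _) := by
    rintro _ ⟨v, hv, rfl⟩
    rcases Submodule.mem_sup.1 hv with ⟨a, ha, k, hk, rfl⟩
    have h1 : Submodule.orthogonalProjectionOnto ((sub2 : Submodule ℂ (WithLp 2 (H₁ × H₂)))ᗮ) a = 0 := by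
      apply Submodule.orthogonalProjectionOnto_apply_of_mem_orthogonal
      rw [Submodule.orthogonal_orthogonal]
      exact ha
    have h2 : (Submodule.orthogonalProjectionOnto ((sub2 : Submodule ℂ (WithLp 2 (H₁ × H₂)))ᗮ) k :
        WithLp 2 (H₁ × H₂)) = k :=
      Submodule.starProjection_eq_self_iff.2 (Submodule.mem_inf.1 hk).2
    have : Q (a + k) = k := by
      rw [hQ]
      simp only [ContinuousLinearMap.coe_comp', Function.comp_apply, Submodule.coe_subtypeL',
        Submodule.coe_subtype, map_add, h1, h2]
      simp [h2]
    rw [this]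
    exact hk
  have hxQ : Q x = x := by
    rw [hQ]
    simp only [ContinuousLinearMap.coe_comp', Function.comp_apply, Submodule.coe_subtypeL',
      Submodule.coe_subtype]
    exact Submodule.starProjection_eq_self_iff.2 hx2
  have : x ∈ closure (K₁ : Set (WithLp 2 (H₁ × H₂))) := by
    rw [← hxQ]
    have h1 : Q x ∈ Q '' (closure (V : Set _)) := ⟨x, hx1, rfl⟩
    have h2 := image_closure_subset_closure_image Q.continuous (s := (V : Set (WithLp 2 (H₁ × H₂))))
    exact (closure_mono hQV) (h2 h1)
  have hK₁cl : IsClosed (K₁ : Set (WithLp 2 (H₁ × H₂))) := by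
    rw [hK₁, Submodule.coe_inf]
    exact hKcl.inter (Submodule.isClosed_orthogonal _)
  have := hK₁cl.closure_subset this
  exact (Submodule.mem_inf.1 this).1

lemma orbit_ASet_eq_M :
    orbit (blockOp Ω₁ Ω₂ Γ) (ASet Γ) = H1cD Ω₁ Ω₂ Γ ⊔ H2cD Ω₁ Ω₂ Γ := by
  apply le_antisymm
  · exact orbit_le_M Ω₁ Ω₂ Γ (ASet_subset_M Ω₁ Ω₂ Γ)
  · apply sup_le
    · apply H1cD_le_of_closed_invariant Ω₁ Ω₂ Γ (orbit_isClosed _ _)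
        (fun _ hz => orbit_maps _ _ hz)
      · exact fun y => subset_orbit _ _ (by exact Or.inl ⟨Γ y, ⟨y, rfl⟩, rfl⟩)
      · exact fun x => subset_orbit _ _ (by exact Or.inr ⟨_, ⟨x, rfl⟩, rfl⟩)
    · apply H2cD_le_of_closed_invariant Ω₁ Ω₂ Γ (orbit_isClosed _ _)
        (fun _ hz => orbit_maps _ _ hz)
      · exact fun y => subset_orbit _ _ (by exact Or.inl ⟨Γ y, ⟨y, rfl⟩, rfl⟩)
      · exact fun x => subset_orbit _ _ (by exact Or.inr ⟨_, ⟨x, rfl⟩, rfl⟩)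

end Recon
section OrbitCyclic

local notation "⟪" x ", " y "⟫" => @inner ℂ _ _ x y

variable (Ω₁ : H₁ →L[ℂ] H₁) (Ω₂ : H₂ →L[ℂ] H₂) (Γ : H₂ →L[ℂ] H₁)

lemma adjoint_vanish {z : H₁} (hz : z ∈ (LinearMap.range (Γ : H₂ →ₗ[ℂ] H₁))ᗮ) :
    ContinuousLinearMap.adjoint Γ z = 0 := by
  have h0 : ⟪(ContinuousLinearMap.adjoint Γ z : H₂), ContinuousLinearMap.adjoint Γ z⟫ = 0 := by
    rw [ContinuousLinearMap.adjoint_inner_left]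
    rw [Submodule.mem_orthogonal] at hz
    exact inner_eq_zero_symm.1 (hz _ ⟨ContinuousLinearMap.adjoint Γ z, rfl⟩)
  exact inner_self_eq_zero.1 h0

lemma orbit_H2cD_eq_M (hΩ₁ : IsSelfAdjoint Ω₁) (hΩ₂ : IsSelfAdjoint Ω₂) :
    orbit (blockOp Ω₁ Ω₂ Γ) ((H2cD Ω₁ Ω₂ Γ : Submodule ℂ (WithLp 2 (H₁ × H₂))) :
      Set (WithLp 2 (H₁ × H₂))) = H1cD Ω₁ Ω₂ Γ ⊔ H2cD Ω₁ Ω₂ Γ := by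
  have hB : IsSelfAdjoint (blockOp Ω₁ Ω₂ Γ) := blockOp_selfAdjoint Γ hΩ₁ hΩ₂
  apply le_antisymm
  · exact orbit_le_M Ω₁ Ω₂ Γ (fun z hz => Submodule.mem_sup_right hz)
  · rw [← orbit_ASet_eq_M]
    apply orbit_le
    · rintro z (⟨x, ⟨y, rfl⟩, rfl⟩ | ⟨y, ⟨x, rfl⟩, rfl⟩)
      · -- `inl' (Γ y)` lies in the orbit of `H2c`
        haveI : CompleteSpace (orbit (blockOp Ω₁ Ω₂ Γ)
            ((sub1 : Submodule ℂ (WithLp 2 (H₁ × H₂))) : Set (WithLp 2 (H₁ × H₂)))) :=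
          (orbit_isClosed _ _).completeSpace_coe
        set O : Submodule ℂ (WithLp 2 (H₁ × H₂)) :=
          orbit (blockOp Ω₁ Ω₂ Γ) ((sub1 : Submodule ℂ (WithLp 2 (H₁ × H₂))) :
            Set (WithLp 2 (H₁ × H₂))) with hO
        set h : WithLp 2 (H₁ × H₂) := (Submodule.orthogonalProjectionOnto O (inr' y) : WithLp 2 (H₁ × H₂))
          with hh
        have hw : inr' y - h ∈ Oᗮ := Submodule.sub_starProjection_mem_orthogonal (inr' y)
        have hsub1O : (sub1 : Submodule ℂ (WithLp 2 (H₁ × H₂))) ≤ O :=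
          fun u hu => subset_orbit _ _ hu
        have hOperp : Oᗮ ≤ (sub1 : Submodule ℂ (WithLp 2 (H₁ × H₂)))ᗮ :=
          Submodule.orthogonal_le hsub1O
        have hinr : (inr' y : WithLp 2 (H₁ × H₂)) ∈
            (sub1 : Submodule ℂ (WithLp 2 (H₁ × H₂)))ᗮ := by
          rw [sub1_orth]; exact mem_sub2.2 rfl
        have hhperp : h ∈ (sub1 : Submodule ℂ (WithLp 2 (H₁ × H₂)))ᗮ := by
          have : h = inr' y - (inr' y - h) := by abel
          rw [this]
          exact Submodule.sub_mem _ hinr (hOperp hw)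
        have hhmem : h ∈ H2cD Ω₁ Ω₂ Γ := Submodule.mem_inf.2 ⟨Submodule.coe_mem _, hhperp⟩
        have hfst : h.fst = 0 := by
          rw [sub1_orth] at hhperp; exact mem_sub2.1 hhperp
        -- the orthogonal rest is killed by Γ
        have hBw : blockOp Ω₁ Ω₂ Γ (inr' y - h) ∈ Oᗮ := by
          rw [Submodule.mem_orthogonal]
          intro u hu
          have hsym := hB.isSymmetric u (inr' y - h)
          have h1 : ⟪blockOp Ω₁ Ω₂ Γ u, inr' y - h⟫ = ⟪u, blockOp Ω₁ Ω₂ Γ (inr' y - h)⟫ := by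
            exact hsym
          rw [← h1]
          rw [Submodule.mem_orthogonal] at hw
          exact hw _ (orbit_maps _ _ hu)
        have hwfst : (inr' y - h : WithLp 2 (H₁ × H₂)).fst = 0 := by
          have := hOperp hw; rw [sub1_orth] at this; exact mem_sub2.1 this
        have hBwfst : (blockOp Ω₁ Ω₂ Γ (inr' y - h)).fst = 0 := by
          have := hOperp hBw; rw [sub1_orth] at this; exact mem_sub2.1 this
        have hΓw : Γ ((inr' y - h : WithLp 2 (H₁ × H₂)).snd) = 0 := by
          rw [blockOp_fst, hwfst, map_zero, zero_add] at hBwfst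
          exact hBwfst
        have hy : y = h.snd + (inr' y - h : WithLp 2 (H₁ × H₂)).snd := by
          rw [snd_sub, inr'_snd]; abel
        have hΓy : Γ y = Γ h.snd := by rw [hy, map_add, hΓw, add_zero]
        rw [ContinuousLinearMap.coe_coe, hΓy]
        -- now `inl' (Γ h.snd)` is in the orbit of `H2c`
        have hh2 : h ∈ orbit (blockOp Ω₁ Ω₂ Γ)
            ((H2cD Ω₁ Ω₂ Γ : Submodule ℂ (WithLp 2 (H₁ × H₂))) : Set (WithLp 2 (H₁ × H₂))) :=
          subset_orbit _ _ hhmem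
        have hBh := orbit_maps _ _ hh2
        have key : (inl' (Γ h.snd) : WithLp 2 (H₁ × H₂))
            = blockOp Ω₁ Ω₂ Γ h - inr' (Ω₂ h.snd) := by
          apply ext2 <;>
            simp [blockOp_fst, blockOp_snd, inl'_fst, inl'_snd, inr'_fst, inr'_snd, fst_sub,
              snd_sub, hfst]
        rw [key]
        exact Submodule.sub_mem _ hBh (subset_orbit _ _ (snd_step Ω₁ Ω₂ Γ hhmem))
      · exact subset_orbit _ _ (inr_gammaStar_mem Ω₁ Ω₂ Γ x)
    · exact orbit_isClosed _ _
    · exact fun z hz => orbit_maps _ _ hz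

lemma orbit_H1cD_eq_M (hΩ₁ : IsSelfAdjoint Ω₁) (hΩ₂ : IsSelfAdjoint Ω₂) :
    orbit (blockOp Ω₁ Ω₂ Γ) ((H1cD Ω₁ Ω₂ Γ : Submodule ℂ (WithLp 2 (H₁ × H₂))) :
      Set (WithLp 2 (H₁ × H₂))) = H1cD Ω₁ Ω₂ Γ ⊔ H2cD Ω₁ Ω₂ Γ := by
  have hB : IsSelfAdjoint (blockOp Ω₁ Ω₂ Γ) := blockOp_selfAdjoint Γ hΩ₁ hΩ₂
  apply le_antisymm
  · exact orbit_le_M Ω₁ Ω₂ Γ (fun z hz => Submodule.mem_sup_left hz)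
  · rw [← orbit_ASet_eq_M]
    apply orbit_le
    · rintro z (⟨x, ⟨y, rfl⟩, rfl⟩ | ⟨y, ⟨x, rfl⟩, rfl⟩)
      · exact subset_orbit _ _ (inl_gamma_mem Ω₁ Ω₂ Γ y)
      · -- `inr' (Γ† x)` lies in the orbit of `H1c`
        haveI : CompleteSpace (orbit (blockOp Ω₁ Ω₂ Γ)
            ((sub2 : Submodule ℂ (WithLp 2 (H₁ × H₂))) : Set (WithLp 2 (H₁ × H₂)))) :=
          (orbit_isClosed _ _).completeSpace_coe
        set O : Submodule ℂ (WithLp 2 (H₁ × H₂)) :=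
          orbit (blockOp Ω₁ Ω₂ Γ) ((sub2 : Submodule ℂ (WithLp 2 (H₁ × H₂))) :
            Set (WithLp 2 (H₁ × H₂))) with hO
        set h : WithLp 2 (H₁ × H₂) := (Submodule.orthogonalProjectionOnto O (inl' x) : WithLp 2 (H₁ × H₂))
          with hh
        have hw : inl' x - h ∈ Oᗮ := Submodule.sub_starProjection_mem_orthogonal (inl' x)
        have hsub2O : (sub2 : Submodule ℂ (WithLp 2 (H₁ × H₂))) ≤ O :=
          fun u hu => subset_orbit _ _ hu
        have hOperp : Oᗮ ≤ (sub2 : Submodule ℂ (WithLp 2 (H₁ × H₂)))ᗮ :=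
          Submodule.orthogonal_le hsub2O
        have hinl : (inl' x : WithLp 2 (H₁ × H₂)) ∈
            (sub2 : Submodule ℂ (WithLp 2 (H₁ × H₂)))ᗮ := by
          rw [sub2_orth]; exact mem_sub1.2 rfl
        have hhperp : h ∈ (sub2 : Submodule ℂ (WithLp 2 (H₁ × H₂)))ᗮ := by
          have : h = inl' x - (inl' x - h) := by abel
          rw [this]
          exact Submodule.sub_mem _ hinl (hOperp hw)
        have hhmem : h ∈ H1cD Ω₁ Ω₂ Γ := Submodule.mem_inf.2 ⟨Submodule.coe_mem _, hhperp⟩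
        have hsnd : h.snd = 0 := by
          rw [sub2_orth] at hhperp; exact mem_sub1.1 hhperp
        have hBw : blockOp Ω₁ Ω₂ Γ (inl' x - h) ∈ Oᗮ := by
          rw [Submodule.mem_orthogonal]
          intro u hu
          have hsym := hB.isSymmetric u (inl' x - h)
          have h1 : ⟪blockOp Ω₁ Ω₂ Γ u, inl' x - h⟫ = ⟪u, blockOp Ω₁ Ω₂ Γ (inl' x - h)⟫ := by
            exact hsym
          rw [← h1]
          rw [Submodule.mem_orthogonal] at hw
          exact hw _ (orbit_maps _ _ hu)
        have hwsnd : (inl' x - h : WithLp 2 (H₁ × H₂)).snd = 0 := by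
          have := hOperp hw; rw [sub2_orth] at this; exact mem_sub1.1 this
        have hBwsnd : (blockOp Ω₁ Ω₂ Γ (inl' x - h)).snd = 0 := by
          have := hOperp hBw; rw [sub2_orth] at this; exact mem_sub1.1 this
        have hΓw : ContinuousLinearMap.adjoint Γ ((inl' x - h : WithLp 2 (H₁ × H₂)).fst) = 0 := by
          rw [blockOp_snd, hwsnd, map_zero, add_zero] at hBwsnd
          exact hBwsnd
        have hx : x = h.fst + (inl' x - h : WithLp 2 (H₁ × H₂)).fst := by
          rw [fst_sub, inl'_fst]; abel
        have hΓx : ContinuousLinearMap.adjoint Γ x = ContinuousLinearMap.adjoint Γ h.fst := by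
          rw [hx, map_add, hΓw, add_zero]
        rw [ContinuousLinearMap.coe_coe, hΓx]
        have hh1 : h ∈ orbit (blockOp Ω₁ Ω₂ Γ)
            ((H1cD Ω₁ Ω₂ Γ : Submodule ℂ (WithLp 2 (H₁ × H₂))) : Set (WithLp 2 (H₁ × H₂))) :=
          subset_orbit _ _ hhmem
        have hBh := orbit_maps _ _ hh1
        have key : (inr' (ContinuousLinearMap.adjoint Γ h.fst) : WithLp 2 (H₁ × H₂))
            = blockOp Ω₁ Ω₂ Γ h - inl' (Ω₁ h.fst) := by
          apply ext2 <;>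
            simp [blockOp_fst, blockOp_snd, inl'_fst, inl'_snd, inr'_fst, inr'_snd, fst_sub,
              snd_sub, hsnd]
        rw [key]
        exact Submodule.sub_mem _ hBh (subset_orbit _ _ (fst_step Ω₁ Ω₂ Γ hhmem))
    · exact orbit_isClosed _ _
    · exact fun z hz => orbit_maps _ _ hz

end OrbitCyclic
section Generators

lemma span_range_val_basis {H : Type*} [NormedAddCommGroup H] [InnerProductSpace ℂ H]
    {K : Submodule ℂ H} {ι : Type*} (b : Module.Basis ι ℂ K) :
    Submodule.span ℂ (Set.range (fun i => (b i : H))) = K := by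
  have h1 : Submodule.map K.subtype (Submodule.span ℂ (Set.range b)) = K := by
    rw [b.span_eq, Submodule.map_top, Submodule.range_subtype]
  conv_rhs => rw [← h1]
  rw [Submodule.map_span, ← Set.range_comp]
  rfl

variable (Ω₁ : H₁ →L[ℂ] H₁) (Ω₂ : H₂ →L[ℂ] H₂) (Γ : H₂ →L[ℂ] H₁)

/-- A finite-dimensional subspace admits a generating set of size its rank having
the same orbit. -/
lemma exists_gen_of_subspace (N : Submodule ℂ (WithLp 2 (H₁ × H₂)))
    (hN : FiniteDimensional ℂ N) :
    ∃ G : Set (WithLp 2 (H₁ × H₂)), G ⊆ (N : Set (WithLp 2 (H₁ × H₂))) ∧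
      orbit (blockOp Ω₁ Ω₂ Γ) G = orbit (blockOp Ω₁ Ω₂ Γ) (N : Set (WithLp 2 (H₁ × H₂))) ∧
      Cardinal.mk G ≤ Module.rank ℂ N := by
  classical
  haveI := hN
  set b := Module.finBasis ℂ N with hb
  refine ⟨Set.range (fun i => (b i : WithLp 2 (H₁ × H₂))), ?_, ?_, ?_⟩
  · rintro _ ⟨i, rfl⟩; exact (b i).2
  · apply le_antisymm
    · exact orbit_mono _ (by rintro _ ⟨i, rfl⟩; exact (b i).2)
    · apply orbit_le
      · intro x hx
        have hxN : x ∈ N := hx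
        have hsp := span_range_val_basis b
        rw [← hsp] at hxN
        exact Submodule.span_le.2 (subset_orbit _ _) hxN
      · exact orbit_isClosed _ _
      · exact fun z hz => orbit_maps _ _ hz
  · have h1 := Cardinal.mk_range_le_lift (f := fun i => (b i : WithLp 2 (H₁ × H₂)))
    rw [Cardinal.mk_fin, Cardinal.lift_natCast, Cardinal.lift_uzero] at h1
    calc Cardinal.mk (Set.range (fun i => (b i : WithLp 2 (H₁ × H₂))))
        ≤ (Module.finrank ℂ N : Cardinal) := h1
    _ = Module.rank ℂ N := Module.finrank_eq_rank ℂ N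

/-- The coupling generating set: a spanning family of size `2 · rank Γ`. -/
lemma exists_gen_coupling (hrank : FiniteDimensional ℂ (LinearMap.range (Γ : H₂ →ₗ[ℂ] H₁))) :
    ∃ G : Set (WithLp 2 (H₁ × H₂)),
      G ⊆ ((H1cD Ω₁ Ω₂ Γ ⊔ H2cD Ω₁ Ω₂ Γ : Submodule ℂ (WithLp 2 (H₁ × H₂))) :
        Set (WithLp 2 (H₁ × H₂))) ∧
      orbit (blockOp Ω₁ Ω₂ Γ) G = H1cD Ω₁ Ω₂ Γ ⊔ H2cD Ω₁ Ω₂ Γ ∧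
      Cardinal.mk G ≤ ((2 * Module.finrank ℂ (LinearMap.range (Γ : H₂ →ₗ[ℂ] H₁)) : ℕ) : Cardinal) := by
  classical
  haveI := hrank
  haveI : CompleteSpace (LinearMap.range (Γ : H₂ →ₗ[ℂ] H₁)) := FiniteDimensional.complete ℂ _
  set b := Module.finBasis ℂ (LinearMap.range (Γ : H₂ →ₗ[ℂ] H₁)) with hb
  set g₁ : Fin (Module.finrank ℂ (LinearMap.range (Γ : H₂ →ₗ[ℂ] H₁))) → WithLp 2 (H₁ × H₂) :=
    fun i => inl' (b i : H₁) with hg₁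
  set g₂ : Fin (Module.finrank ℂ (LinearMap.range (Γ : H₂ →ₗ[ℂ] H₁))) → WithLp 2 (H₁ × H₂) :=
    fun i => inr' (ContinuousLinearMap.adjoint Γ (b i : H₁)) with hg₂
  set G : Set (WithLp 2 (H₁ × H₂)) := Set.range g₁ ∪ Set.range g₂ with hG
  have hGM : G ⊆ ((H1cD Ω₁ Ω₂ Γ ⊔ H2cD Ω₁ Ω₂ Γ : Submodule ℂ (WithLp 2 (H₁ × H₂))) :
      Set (WithLp 2 (H₁ × H₂))) := by
    rintro _ (⟨i, rfl⟩ | ⟨i, rfl⟩)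
    · obtain ⟨y, hy⟩ := (b i).2
      have : (g₁ i : WithLp 2 (H₁ × H₂)) = inl' (Γ y) := by rw [hg₁]; simp [← hy]
      rw [this]
      exact Submodule.mem_sup_left (inl_gamma_mem Ω₁ Ω₂ Γ y)
    · exact Submodule.mem_sup_right (inr_gammaStar_mem Ω₁ Ω₂ Γ (b i : H₁))
  have hspan : Submodule.span ℂ (Set.range (fun i => ((b i : H₁)))) = LinearMap.range (Γ : H₂ →ₗ[ℂ] H₁) :=
    span_range_val_basis b
  -- `inl'` of the range of `Γ` is in the span of `g₁`
  have hinl : ∀ u ∈ LinearMap.range (Γ : H₂ →ₗ[ℂ] H₁),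
      (inl' u : WithLp 2 (H₁ × H₂)) ∈ Submodule.span ℂ (Set.range g₁) := by
    intro u hu
    have h1 : (inl' u : WithLp 2 (H₁ × H₂)) ∈
        Submodule.map ((inl' : H₁ →L[ℂ] WithLp 2 (H₁ × H₂)) : H₁ →ₗ[ℂ] WithLp 2 (H₁ × H₂)) (LinearMap.range (Γ : H₂ →ₗ[ℂ] H₁)) :=
      Submodule.mem_map.2 ⟨u, hu, rfl⟩
    rwa [← hspan, Submodule.map_span, ← Set.range_comp] at h1
  have hinr : ∀ u ∈ LinearMap.range (Γ : H₂ →ₗ[ℂ] H₁),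
      (inr' (ContinuousLinearMap.adjoint Γ u) : WithLp 2 (H₁ × H₂)) ∈
        Submodule.span ℂ (Set.range g₂) := by
    intro u hu
    have h1 : (inr' (ContinuousLinearMap.adjoint Γ u) : WithLp 2 (H₁ × H₂)) ∈
        Submodule.map (((inr' : H₂ →L[ℂ] WithLp 2 (H₁ × H₂)) ∘L ContinuousLinearMap.adjoint Γ :
            H₁ →L[ℂ] WithLp 2 (H₁ × H₂)) : H₁ →ₗ[ℂ] WithLp 2 (H₁ × H₂))
          (LinearMap.range (Γ : H₂ →ₗ[ℂ] H₁)) := Submodule.mem_map.2 ⟨u, hu, rfl⟩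
    rwa [← hspan, Submodule.map_span, ← Set.range_comp] at h1
  have hA : ASet Γ ⊆ ((orbit (blockOp Ω₁ Ω₂ Γ) G : Submodule ℂ (WithLp 2 (H₁ × H₂))) :
      Set (WithLp 2 (H₁ × H₂))) := by
    rintro z (⟨x, ⟨y, rfl⟩, rfl⟩ | ⟨v, ⟨x, rfl⟩, rfl⟩)
    · have h1 := hinl (Γ y) ⟨y, rfl⟩
      have h2 : Submodule.span ℂ (Set.range g₁) ≤ orbit (blockOp Ω₁ Ω₂ Γ) G :=
        Submodule.span_le.2 (fun w hw => subset_orbit _ _ (Or.inl hw))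
      exact h2 h1
    · set P := Submodule.orthogonalProjectionOnto (LinearMap.range (Γ : H₂ →ₗ[ℂ] H₁)) with hP
      have hzero : ContinuousLinearMap.adjoint Γ (x - (P x : H₁)) = 0 :=
        adjoint_vanish Γ (Submodule.sub_starProjection_mem_orthogonal x)
      have hx : ContinuousLinearMap.adjoint Γ x
          = ContinuousLinearMap.adjoint Γ ((P x : H₁)) := by
        have := map_sub (ContinuousLinearMap.adjoint Γ) x ((P x : H₁))
        rw [hzero] at this
        exact (sub_eq_zero.1 this.symm)
      rw [ContinuousLinearMap.coe_coe, hx]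
      have h1 := hinr ((P x : H₁)) (Submodule.coe_mem _)
      have h2 : Submodule.span ℂ (Set.range g₂) ≤ orbit (blockOp Ω₁ Ω₂ Γ) G :=
        Submodule.span_le.2 (fun w hw => subset_orbit _ _ (Or.inr hw))
      exact h2 h1
  refine ⟨G, hGM, ?_, ?_⟩
  · apply le_antisymm
    · exact orbit_le_M Ω₁ Ω₂ Γ hGM
    · rw [← orbit_ASet_eq_M]
      exact orbit_le _ hA (orbit_isClosed _ _) (fun z hz => orbit_maps _ _ hz)
  · have h1 := Cardinal.mk_union_le (Set.range g₁) (Set.range g₂)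
    have h2 := Cardinal.mk_range_le_lift (f := g₁)
    have h3 := Cardinal.mk_range_le_lift (f := g₂)
    rw [Cardinal.mk_fin, Cardinal.lift_natCast, Cardinal.lift_uzero] at h2 h3
    calc Cardinal.mk G ≤ _ := h1
    _ ≤ (Module.finrank ℂ (LinearMap.range (Γ : H₂ →ₗ[ℂ] H₁)) : Cardinal)
        + (Module.finrank ℂ (LinearMap.range (Γ : H₂ →ₗ[ℂ] H₁)) : Cardinal) := add_le_add h2 h3
    _ = ((2 * Module.finrank ℂ (LinearMap.range (Γ : H₂ →ₗ[ℂ] H₁)) : ℕ) : Cardinal) := by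
      rw [two_mul]; push_cast; ring

end Generators
universe u v

/-- the spectral multiplicity of the restriction `Ωc` of `Ω` to the
reconstructible part `H₁c ⊕ H₂c` is at most `min(2 rank Γ, dim H₁c, dim H₂c)`:
there is a generating set `G ⊆ H₁c ⊕ H₂c` whose `Ω`-orbit is `H₁c ⊕ H₂c` and whose
cardinality is bounded by this minimum. -/
theorem multiplicity_coupled_part
    {H₁ : Type u} {H₂ : Type v} [NormedAddCommGroup H₁] [InnerProductSpace ℂ H₁]
    [CompleteSpace H₁] [NormedAddCommGroup H₂] [InnerProductSpace ℂ H₂] [CompleteSpace H₂]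
    (Ω₁ : H₁ →L[ℂ] H₁) (Ω₂ : H₂ →L[ℂ] H₂) (Γ : H₂ →L[ℂ] H₁)
    (hΩ₁ : IsSelfAdjoint Ω₁) (hΩ₂ : IsSelfAdjoint Ω₂)
    (hrank : FiniteDimensional ℂ (LinearMap.range (Γ : H₂ →ₗ[ℂ] H₁)))
    (Ω : WithLp 2 (H₁ × H₂) →L[ℂ] WithLp 2 (H₁ × H₂)) (hΩ : Ω = blockOp Ω₁ Ω₂ Γ)
    (H2c H1c : Submodule ℂ (WithLp 2 (H₁ × H₂)))
    (hH2c : H2c = orbit Ω (sub1 : Submodule ℂ (WithLp 2 (H₁ × H₂))) ⊓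
      (sub1 : Submodule ℂ (WithLp 2 (H₁ × H₂)))ᗮ)
    (hH1c : H1c = orbit Ω (sub2 : Submodule ℂ (WithLp 2 (H₁ × H₂))) ⊓
      (sub2 : Submodule ℂ (WithLp 2 (H₁ × H₂)))ᗮ) :
    ∃ G : Set (WithLp 2 (H₁ × H₂)), G ⊆ (H1c ⊔ H2c : Submodule ℂ (WithLp 2 (H₁ × H₂))) ∧
      orbit Ω G = H1c ⊔ H2c ∧
      Cardinal.mk G ≤
        min (2 * Cardinal.lift.{v} (Module.rank ℂ (LinearMap.range (Γ : H₂ →ₗ[ℂ] H₁))))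
          (min (Module.rank ℂ H1c) (Module.rank ℂ H2c)) := by
  classical
  haveI := hrank
  subst hΩ
  have e1 : H1c = H1cD Ω₁ Ω₂ Γ := hH1c
  have e2 : H2c = H2cD Ω₁ Ω₂ Γ := hH2c
  subst e1
  subst e2
  have ha : 2 * Cardinal.lift.{v} (Module.rank ℂ (LinearMap.range (Γ : H₂ →ₗ[ℂ] H₁)))
      = ((2 * Module.finrank ℂ (LinearMap.range (Γ : H₂ →ₗ[ℂ] H₁)) : ℕ) : Cardinal) := by
    rw [← Module.finrank_eq_rank ℂ (LinearMap.range (Γ : H₂ →ₗ[ℂ] H₁)), Cardinal.lift_natCast]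
    push_cast
    ring
  rcases le_or_gt ((2 * Module.finrank ℂ (LinearMap.range (Γ : H₂ →ₗ[ℂ] H₁)) : ℕ) : Cardinal)
      (min (Module.rank ℂ (H1cD Ω₁ Ω₂ Γ)) (Module.rank ℂ (H2cD Ω₁ Ω₂ Γ))) with hle | hlt
  · obtain ⟨G, hG1, hG2, hG3⟩ := exists_gen_coupling Ω₁ Ω₂ Γ hrank
    exact ⟨G, hG1, hG2, le_min (by rw [ha]; exact hG3) (hG3.trans hle)⟩
  · have hfin : min (Module.rank ℂ (H1cD Ω₁ Ω₂ Γ)) (Module.rank ℂ (H2cD Ω₁ Ω₂ Γ)) < Cardinal.aleph0 :=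
      hlt.trans (Cardinal.nat_lt_aleph0 _)
    rcases le_total (Module.rank ℂ (H1cD Ω₁ Ω₂ Γ)) (Module.rank ℂ (H2cD Ω₁ Ω₂ Γ)) with hbc | hcb
    · -- `H1c` has smallest dimension
      have hb : Module.rank ℂ (H1cD Ω₁ Ω₂ Γ) < Cardinal.aleph0 := by
        rw [min_eq_left hbc] at hfin; exact hfin
      haveI hNfd : FiniteDimensional ℂ (H1cD Ω₁ Ω₂ Γ) := Module.rank_lt_aleph0_iff.1 hb
      obtain ⟨G, hG1, hG2, hG3⟩ := exists_gen_of_subspace Ω₁ Ω₂ Γ (H1cD Ω₁ Ω₂ Γ) hNfd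
      refine ⟨G, ?_, ?_, ?_⟩
      · exact fun x hx => Submodule.mem_sup_left (hG1 hx)
      · rw [hG2]; exact orbit_H1cD_eq_M Ω₁ Ω₂ Γ hΩ₁ hΩ₂
      · refine le_min ?_ (le_min hG3 (hG3.trans hbc))
        rw [ha]
        refine hG3.trans (le_of_lt ?_)
        rw [min_eq_left hbc] at hlt
        exact hlt
    · -- `H2c` has smallest dimension
      have hc : Module.rank ℂ (H2cD Ω₁ Ω₂ Γ) < Cardinal.aleph0 := by
        rw [min_eq_right hcb] at hfin; exact hfin
      haveI hNfd : FiniteDimensional ℂ (H2cD Ω₁ Ω₂ Γ) := Module.rank_lt_aleph0_iff.1 hc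
      obtain ⟨G, hG1, hG2, hG3⟩ := exists_gen_of_subspace Ω₁ Ω₂ Γ (H2cD Ω₁ Ω₂ Γ) hNfd
      refine ⟨G, ?_, ?_, ?_⟩
      · exact fun x hx => Submodule.mem_sup_right (hG1 hx)
      · rw [hG2]; exact orbit_H2cD_eq_M Ω₁ Ω₂ Γ hΩ₁ hΩ₂
      · refine le_min ?_ (le_min (hG3.trans hcb) hG3)
        rw [ha]
        refine hG3.trans (le_of_lt ?_)
        rw [min_eq_right hcb] at hlt
        exact hlt
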